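/- Define A_2(θ) = θ/2 + (3/2)sin(θ) − π/4 + (π/4)cos(θ) for 0 < θ < π, and A_2(θ) = −θ/2 − (3/2)sin(θ) + 3π/4 + (π/4)cos(θ) for π < θ < 2π. Then (1/(2π)) ∫₀^{2π} A_2(θ) dθ = 3/π. -/

import Mathlib

open Real Set

theorem stmt_0 (A2 : ℝ → ℝ)
    (h1 : ∀ θ ∈ Set.Ioo (0:ℝ) π,
      A2 θ = θ/2 + (3/2) * Real.sin θ - π/4 + (π/4) * Real.cos θ)
    (h2 : ∀ θ ∈ Set.Ioo π (2*π),
      A2 θ = -θ/2 - (3/2) * Real.sin θ + 3*π/4 + (π/4) * Real.cos θ) :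
    (1/(2*π)) * ∫ θ in (0:ℝ)..(2*π), A2 θ = 3/π := by
  have hπ : (0:ℝ) < π := Real.pi_pos
  set f1 : ℝ → ℝ := fun θ => θ/2 + (3/2) * Real.sin θ - π/4 + (π/4) * Real.cos θ with hf1
  set f2 : ℝ → ℝ := fun θ => -θ/2 - (3/2) * Real.sin θ + 3*π/4 + (π/4) * Real.cos θ with hf2
  have hne : ∀ c : ℝ, ∀ᵐ x : ℝ, x ≠ c := by
    intro c
    rw [MeasureTheory.ae_iff]
    have : {x : ℝ | ¬ x ≠ c} = {c} := by ext x; simp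
    simp [this]
  have hae1 : ∀ᵐ x : ℝ, x ∈ Set.uIoc (0:ℝ) π → A2 x = f1 x := by
    filter_upwards [hne π] with x hxne hx
    rw [Set.uIoc_of_le hπ.le] at hx
    exact h1 x ⟨hx.1, lt_of_le_of_ne hx.2 hxne⟩
  have hae2 : ∀ᵐ x : ℝ, x ∈ Set.uIoc π (2*π) → A2 x = f2 x := by
    filter_upwards [hne (2*π)] with x hxne hx
    rw [Set.uIoc_of_le (by linarith : π ≤ 2*π)] at hx
    exact h2 x ⟨hx.1, lt_of_le_of_ne hx.2 hxne⟩
  have hi1 : IntervalIntegrable A2 MeasureTheory.volume 0 π := by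
    apply IntervalIntegrable.congr_ae (f := f1)
    · apply Continuous.intervalIntegrable; fun_prop
    · exact (MeasureTheory.ae_restrict_iff' measurableSet_uIoc).mpr
        (hae1.mono fun x h hx => (h hx).symm)
  have hi2 : IntervalIntegrable A2 MeasureTheory.volume π (2*π) := by
    apply IntervalIntegrable.congr_ae (f := f2)
    · apply Continuous.intervalIntegrable; fun_prop
    · exact (MeasureTheory.ae_restrict_iff' measurableSet_uIoc).mpr
        (hae2.mono fun x h hx => (h hx).symm)
  have hsplit : (∫ θ in (0:ℝ)..(2*π), A2 θ) =
      (∫ θ in (0:ℝ)..π, A2 θ) + ∫ θ in π..(2*π), A2 θ :=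
    (intervalIntegral.integral_add_adjacent_intervals hi1 hi2).symm
  have e1 : (∫ θ in (0:ℝ)..π, A2 θ) = ∫ θ in (0:ℝ)..π, f1 θ :=
    intervalIntegral.integral_congr_ae hae1
  have e2 : (∫ θ in π..(2*π), A2 θ) = ∫ θ in π..(2*π), f2 θ :=
    intervalIntegral.integral_congr_ae hae2
  have v1 : (∫ θ in (0:ℝ)..π, f1 θ) = 3 := by
    have hd : ∀ x ∈ Set.uIcc (0:ℝ) π,
        HasDerivAt (fun x : ℝ => x^2/4 - (3/2) * Real.cos x - π/4 * x + π/4 * Real.sin x)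
          (f1 x) x := by
      intro x _
      have : HasDerivAt (fun x : ℝ => x^2/4 - (3/2) * Real.cos x - π/4 * x + π/4 * Real.sin x)
          (2*x^(2-1)/4 - (3/2) * (-Real.sin x) - π/4 * 1 + π/4 * Real.cos x) x := by
        apply HasDerivAt.add
        apply HasDerivAt.sub
        apply HasDerivAt.sub
        · exact (hasDerivAt_pow 2 x).div_const 4
        · exact (Real.hasDerivAt_cos x).const_mul (3/2)
        · exact (hasDerivAt_id x).const_mul (π/4)
        · exact (Real.hasDerivAt_sin x).const_mul (π/4)
      convert this using 1
      simp [hf1]; ring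
    rw [intervalIntegral.integral_eq_sub_of_hasDerivAt hd
      (by apply Continuous.intervalIntegrable; fun_prop)]
    simp
    ring
  have v2 : (∫ θ in π..(2*π), f2 θ) = 3 := by
    have hd : ∀ x ∈ Set.uIcc π (2*π),
        HasDerivAt (fun x : ℝ => -x^2/4 + (3/2) * Real.cos x + 3*π/4 * x + π/4 * Real.sin x)
          (f2 x) x := by
      intro x _
      have : HasDerivAt (fun x : ℝ => -x^2/4 + (3/2) * Real.cos x + 3*π/4 * x + π/4 * Real.sin x)
          (-(2*x^(2-1))/4 + (3/2) * (-Real.sin x) + 3*π/4 * 1 + π/4 * Real.cos x) x := by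
        apply HasDerivAt.add
        apply HasDerivAt.add
        apply HasDerivAt.add
        · exact ((hasDerivAt_pow 2 x).neg).div_const 4
        · exact (Real.hasDerivAt_cos x).const_mul (3/2)
        · exact (hasDerivAt_id x).const_mul (3*π/4)
        · exact (Real.hasDerivAt_sin x).const_mul (π/4)
      convert this using 1
      simp [hf2]; ring
    rw [intervalIntegral.integral_eq_sub_of_hasDerivAt hd
      (by apply Continuous.intervalIntegrable; fun_prop)]
    simp [Real.cos_two_pi, Real.sin_two_pi, Real.cos_pi, Real.sin_pi]
    ring
  rw [hsplit, e1, e2, v1, v2]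
  field_simp
  ring
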